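/- For all t > 0, the functions τ(t) = -log(t + e^{-t} - 1) and ρ(t) = τ(t) + log(1 - e^{-t}) satisfy the identity (1 - ρ'(t)²/τ''(t)) · e^{2ρ(t) - τ(t) + t} = 1. -/

import Mathlib

open Real Filter

private lemma gpos {s : ℝ} (hs : 0 < s) : 0 < s + Real.exp (-s) - 1 := by
  have := Real.add_one_lt_exp (x := -s) (by linarith)
  linarith

private lemma epos {s : ℝ} (hs : 0 < s) : 0 < 1 - Real.exp (-s) := by
  have : Real.exp (-s) < Real.exp 0 := Real.exp_lt_exp.mpr (by linarith)
  rw [Real.exp_zero] at this; linarith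

private lemma hE' (s : ℝ) : HasDerivAt (fun x : ℝ => Real.exp (-x)) (-Real.exp (-s)) s := by
  simpa using ((hasDerivAt_id s).neg).exp

private lemma keyalg (b g x : ℝ) (hb : b ≠ 0) (hg : g ≠ 0) (hx : x ≠ 0) :
    1 - (x / (b * g)) ^ 2 / (-(x / g ^ 2)) = 1 + x / b ^ 2 := by
  field_simp
  ring

private lemma hG' (s : ℝ) : HasDerivAt (fun x : ℝ => x + Real.exp (-x) - 1)
    (1 - Real.exp (-s)) s := by
  have := ((hasDerivAt_id s).add (hE' s)).sub_const 1
  simpa [sub_eq_add_neg] using this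

theorem tau_rho_identity
    (τ ρ : ℝ → ℝ)
    (hτ : ∀ t, τ t = -Real.log (t + Real.exp (-t) - 1))
    (hρ : ∀ t, ρ t = τ t + Real.log (1 - Real.exp (-t))) :
    ∀ t > (0 : ℝ),
      (1 - (deriv ρ t) ^ 2 / (deriv (deriv τ) t)) * Real.exp (2 * ρ t - τ t + t) = 1 := by
  have hτd : ∀ s : ℝ, 0 < s →
      HasDerivAt τ (-((1 - Real.exp (-s)) / (s + Real.exp (-s) - 1))) s := by
    intro s hs
    have h := ((hG' s).log (gpos hs).ne').neg
    have : τ = fun x => -Real.log (x + Real.exp (-x) - 1) := funext hτ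
    rw [this]; exact h
  intro t ht
  set E := Real.exp (-t) with hEdef
  set G := t + E - 1 with hGdef
  have hGpos : 0 < G := gpos ht
  have hEpos : 0 < 1 - E := epos ht
  -- deriv ρ
  have hρd : HasDerivAt ρ (E / (1 - E) + -((1 - E) / G)) t := by
    have h2 : HasDerivAt (fun x : ℝ => Real.log (1 - Real.exp (-x))) (E / (1 - E)) t := by
      have hn : HasDerivAt (fun x : ℝ => 1 - Real.exp (-x)) (E) t := by
        simpa using (hE' t).const_sub 1
      simpa using hn.log hEpos.ne'
    have : ρ = fun x => τ x + Real.log (1 - Real.exp (-x)) := funext hρ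
    rw [this]
    exact ((hτd t ht).add h2).congr_deriv (by ring)
  -- deriv (deriv τ)
  have hDnum : E * G - (1 - E) * (1 - E) ≠ 0 := by
    have h1 : (1 + t) < Real.exp t := by
      have := Real.add_one_lt_exp (x := t) ht.ne'; linarith
    have h2 : (1 + t) * E < 1 := by
      have := mul_lt_mul_of_pos_right h1 (Real.exp_pos (-t))
      rwa [← Real.exp_add, add_neg_cancel, Real.exp_zero] at this
    have : E * G - (1 - E) * (1 - E) = -(1 - (1 + t) * E) := by
      rw [hGdef]; ring
    rw [this]; intro h; nlinarith
  have hFd : HasDerivAt (fun s : ℝ => -((1 - Real.exp (-s)) / (s + Real.exp (-s) - 1)))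
      (-((E * G - (1 - E) * (1 - E)) / G ^ 2)) t := by
    have hn : HasDerivAt (fun x : ℝ => 1 - Real.exp (-x)) E t := by
      simpa using (hE' t).const_sub 1
    have h := (hn.div (hG' t) hGpos.ne').neg
    exact h
  have hττ : deriv (deriv τ) t = -((E * G - (1 - E) * (1 - E)) / G ^ 2) := by
    have heq : deriv τ =ᶠ[nhds t]
        fun s => -((1 - Real.exp (-s)) / (s + Real.exp (-s) - 1)) := by
      filter_upwards [Ioi_mem_nhds ht] with s hs using (hτd s hs).deriv
    rw [heq.deriv_eq, hFd.deriv]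
  -- exponential value
  have hexp : Real.exp (2 * ρ t - τ t + t) = (1 - E) ^ 2 / G * Real.exp t := by
    have : 2 * ρ t - τ t + t = Real.log ((1 - E) ^ 2 / G) + t := by
      rw [hρ t, hτ t, Real.log_div (by positivity) hGpos.ne', Real.log_pow]
      push_cast; ring
    rw [this, Real.exp_add, Real.exp_log (by positivity)]
  rw [hρd.deriv, hττ, hexp]
  have hEinv : Real.exp t = E⁻¹ := by
    rw [hEdef, Real.exp_neg, inv_inv]
  rw [hEinv]
  have hE0 : E ≠ 0 := (Real.exp_pos _).ne'
  have h1 : E / (1 - E) + -((1 - E) / G)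
      = (E * G - (1 - E) * (1 - E)) / ((1 - E) * G) := by
    calc E / (1 - E) + -((1 - E) / G) = E / (1 - E) + (-(1 - E)) / G := by rw [neg_div]
      _ = (E * G + (1 - E) * -(1 - E)) / ((1 - E) * G) :=
          div_add_div _ _ hEpos.ne' hGpos.ne'
      _ = (E * G - (1 - E) * (1 - E)) / ((1 - E) * G) := by ring_nf
  have key : 1 - (E / (1 - E) + -((1 - E) / G)) ^ 2 /
      (-((E * G - (1 - E) * (1 - E)) / G ^ 2)) = E * G / (1 - E) ^ 2 := by
    rw [h1, keyalg (1 - E) G _ hEpos.ne' hGpos.ne' hDnum]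
    rw [add_comm, div_add' _ _ _ (pow_ne_zero 2 hEpos.ne')]
    congr 1
    ring
  rw [key]
  field_simp
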